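/- Let E = ℝ^d with the Euclidean inner product, Z ⊆ E a linear subspace with orthogonal projection P_Z, and f : E → ℝ differentiable, α-strongly convex, and l-smooth (i.e., ∇f is l-Lipschitz) with 0 < α ≤ l. Let ζ be the minimizer of f over Z and let 0 < γ ≤ 2/(α+l). Then for every z ∈ Z, the projected gradient step z⁺ = P_Z(z - γ ∇f(z)) satisfies ‖z⁺ - ζ‖ ≤ (1 - αγ) ‖z - ζ‖. -/

import Mathlib

open scoped RealInnerProductSpace

lemma cocoercive_aux {E : Type*} [NormedAddCommGroup E] [InnerProductSpace ℝ E]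
    (φ : E → ℝ) (G : E → E) (L : ℝ) (hL : 0 < L)
    (hconv : ∀ a b, φ b + ⟪G b, a - b⟫ ≤ φ a)
    (hsmooth : ∀ a b, φ a ≤ φ b + ⟪G b, a - b⟫ + L / 2 * ‖a - b‖ ^ 2)
    (x y : E) : ‖G x - G y‖ ^ 2 ≤ L * ⟪G x - G y, x - y⟫ := by
  have B : ∀ x y : E, φ x + ⟪G x, y - x⟫ + (2 * L)⁻¹ * ‖G y - G x‖ ^ 2 ≤ φ y := by
    intro x y
    set w := y - L⁻¹ • (G y - G x) with hw
    have h1 := hsmooth w y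
    have h2 := hconv w x
    have e1 : w - y = -(L⁻¹ • (G y - G x)) := by rw [hw]; abel
    have e2 : ⟪G y, w - y⟫ = -(L⁻¹ * ⟪G y, G y - G x⟫) := by
      rw [e1, inner_neg_right, real_inner_smul_right]
    have e3 : ‖w - y‖ ^ 2 = (L⁻¹) ^ 2 * ‖G y - G x‖ ^ 2 := by
      rw [e1, norm_neg, norm_smul, Real.norm_eq_abs, mul_pow, sq_abs]
    have e4 : w - x = (y - x) - L⁻¹ • (G y - G x) := by rw [hw]; abel
    have e5 : ⟪G x, w - x⟫ = ⟪G x, y - x⟫ - L⁻¹ * ⟪G x, G y - G x⟫ := by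
      rw [e4, inner_sub_right, real_inner_smul_right]
    have e6 : ⟪G y, G y - G x⟫ - ⟪G x, G y - G x⟫ = ‖G y - G x‖ ^ 2 := by
      rw [← inner_sub_left, real_inner_self_eq_norm_sq]
    have e7 : L / 2 * ((L⁻¹) ^ 2 * ‖G y - G x‖ ^ 2) = (2 * L)⁻¹ * ‖G y - G x‖ ^ 2 := by
      field_simp
    rw [e2, e3] at h1
    rw [e5] at h2
    rw [e7] at h1
    have e6m : L⁻¹ * ⟪G y, G y - G x⟫ - L⁻¹ * ⟪G x, G y - G x⟫
        = L⁻¹ * ‖G y - G x‖ ^ 2 := by rw [← mul_sub, e6]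
    have e8n : L⁻¹ * ‖G y - G x‖ ^ 2 = 2 * ((2 * L)⁻¹ * ‖G y - G x‖ ^ 2) := by
      have : L⁻¹ = 2 * (2 * L)⁻¹ := by field_simp
      rw [this]; ring
    linarith [h1, h2, e6m, e8n]
  have b1 := B x y
  have b2 := B y x
  have e9 : ⟪G x, y - x⟫ + ⟪G y, x - y⟫ = -⟪G x - G y, x - y⟫ := by
    rw [inner_sub_left]
    have : ⟪G x, y - x⟫ = -⟪G x, x - y⟫ := by rw [← inner_neg_right]; congr 1; abel
    rw [this]; ring
  have e10 : ‖G y - G x‖ = ‖G x - G y‖ := norm_sub_rev _ _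
  rw [e10] at b1
  have h2L : (0:ℝ) < 2 * L := by linarith
  have key : (2 * L)⁻¹ * ‖G x - G y‖ ^ 2 * 2 ≤ ⟪G x - G y, x - y⟫ := by linarith
  have : L⁻¹ * ‖G x - G y‖ ^ 2 ≤ ⟪G x - G y, x - y⟫ := by
    have : (2 * L)⁻¹ * 2 = L⁻¹ := by field_simp
    nlinarith [key]
  calc ‖G x - G y‖ ^ 2 = L * (L⁻¹ * ‖G x - G y‖ ^ 2) := by field_simp
    _ ≤ L * ⟪G x - G y, x - y⟫ := by
        exact mul_le_mul_of_nonneg_left this hL.le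

set_option maxHeartbeats 1600000 in
/-- **Contraction of one projected gradient descent step** (cf. Nesterov, Thm 2.2.14).
If `f` is `α`-strongly convex and `l`-smooth with `0 < α ≤ l`, `ζ` is the minimizer of `f`
over a linear subspace `Z`, and `0 < γ ≤ 2/(α+l)`, then for every `z ∈ Z` the projected
gradient step `z⁺ = P_Z(z - γ ∇f(z))` satisfies `‖z⁺ - ζ‖ ≤ (1 - αγ) ‖z - ζ‖`. -/
theorem projected_gradient_contraction {d : ℕ}
    (Z : Submodule ℝ (EuclideanSpace ℝ (Fin d)))
    (f : EuclideanSpace ℝ (Fin d) → ℝ) (α l γ : ℝ)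
    (hα : 0 < α) (hαl : α ≤ l)
    (hdiff : ∀ x, DifferentiableAt ℝ f x)
    (hsc : ∀ z₁ z₂ : EuclideanSpace ℝ (Fin d),
      f z₂ + ⟪gradient f z₂, z₁ - z₂⟫ + α / 2 * ‖z₁ - z₂‖ ^ 2 ≤ f z₁)
    (hsm : ∀ z₁ z₂ : EuclideanSpace ℝ (Fin d),
      f z₁ ≤ f z₂ + ⟪gradient f z₂, z₁ - z₂⟫ + l / 2 * ‖z₁ - z₂‖ ^ 2)
    (hγ : 0 < γ) (hγ2 : γ ≤ 2 / (α + l))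
    (ζ : EuclideanSpace ℝ (Fin d)) (hζZ : ζ ∈ Z) (hζmin : ∀ z ∈ Z, f ζ ≤ f z)
    (z : EuclideanSpace ℝ (Fin d)) (hz : z ∈ Z) :
    ‖(Z.orthogonalProjectionOnto (z - γ • gradient f z) : EuclideanSpace ℝ (Fin d)) - ζ‖
      ≤ (1 - α * γ) * ‖z - ζ‖ := by
  set g := gradient f with hg
  set x := z - ζ with hx
  set gd := g z - g ζ with hgd
  set S := ⟪gd, x⟫ with hS
  set G2 := ‖gd‖ ^ 2 with hG2
  set X := ‖x‖ ^ 2 with hX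
  have hαl0 : 0 < α + l := by linarith
  have hγal : γ * (α + l) ≤ 2 := by
    rw [div_eq_mul_inv] at hγ2
    calc γ * (α + l) ≤ (2 * (α + l)⁻¹) * (α + l) := by
          exact mul_le_mul_of_nonneg_right hγ2 hαl0.le
      _ = 2 := by field_simp
  have hαγ1 : α * γ ≤ 1 := by nlinarith
  -- strong monotonicity: S ≥ α * X
  have hmono : α * X ≤ S := by
    have h1 := hsc z ζ
    have h2 := hsc ζ z
    have e1 : ⟪g z, ζ - z⟫ = -⟪g z, z - ζ⟫ := by
      rw [← inner_neg_right]; congr 1; abel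
    have e2 : ‖ζ - z‖ = ‖z - ζ‖ := norm_sub_rev _ _
    rw [e1, e2] at h2
    have e3 : S = ⟪g z, z - ζ⟫ - ⟪g ζ, z - ζ⟫ := by
      rw [hS, hgd, hx, inner_sub_left]
    have e4 : X = ‖z - ζ‖ ^ 2 := by rw [hX, hx]
    rw [e4]
    linarith
  -- cocoercivity via auxiliary lemma applied to f - α/2 ‖·‖²
  have hexpand : ∀ a b : EuclideanSpace ℝ (Fin d),
      α / 2 * ‖a - b‖ ^ 2 = α / 2 * ‖a‖ ^ 2 - α * ⟪b, a - b⟫ - α / 2 * ‖b‖ ^ 2 := by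
    intro a b
    rw [norm_sub_sq_real, inner_sub_right, real_inner_self_eq_norm_sq, real_inner_comm]
    ring
  have hcoco : G2 - 2 * α * S + α ^ 2 * X ≤ (l - α) * (S - α * X) := by
    have hkey : ∀ ε : ℝ, 0 < ε →
        ‖gd - α • x‖ ^ 2 ≤ (l - α + ε) * ⟪gd - α • x, x⟫ := by
      intro ε hε
      have hL : (0:ℝ) < l - α + ε := by linarith
      have hconv : ∀ a b, (f b - α / 2 * ‖b‖ ^ 2) + ⟪g b - α • b, a - b⟫ ≤
          f a - α / 2 * ‖a‖ ^ 2 := by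
        intro a b
        have h := hsc a b
        have e := hexpand a b
        rw [inner_sub_left, real_inner_smul_left]
        linarith
      have hsmooth : ∀ a b, f a - α / 2 * ‖a‖ ^ 2 ≤ (f b - α / 2 * ‖b‖ ^ 2) +
          ⟪g b - α • b, a - b⟫ + (l - α + ε) / 2 * ‖a - b‖ ^ 2 := by
        intro a b
        have h := hsm a b
        have e := hexpand a b
        have hnn : 0 ≤ ε / 2 * ‖a - b‖ ^ 2 := by positivity
        rw [inner_sub_left, real_inner_smul_left]
        nlinarith
      have := cocoercive_aux (fun u => f u - α / 2 * ‖u‖ ^ 2)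
        (fun u => g u - α • u) (l - α + ε) hL hconv hsmooth z ζ
      have e : (g z - α • z) - (g ζ - α • ζ) = gd - α • x := by
        rw [hgd, hx, smul_sub]; abel
      rw [e] at this
      have e2 : z - ζ = x := hx.symm
      rw [e2] at this
      exact this
    have hexp2 : ‖gd - α • x‖ ^ 2 = G2 - 2 * α * S + α ^ 2 * X := by
      rw [norm_sub_sq_real, real_inner_smul_right, norm_smul, Real.norm_eq_abs,
        mul_pow, sq_abs, hG2, hS, hX]
      ring
    have hexp3 : ⟪gd - α • x, x⟫ = S - α * X := by
      rw [inner_sub_left, real_inner_smul_left, real_inner_self_eq_norm_sq, hS, hX]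
    have hc : 0 ≤ S - α * X := by linarith
    have hlim : ∀ δ : ℝ, 0 < δ →
        G2 - 2 * α * S + α ^ 2 * X ≤ (l - α) * (S - α * X) + δ := by
      intro δ hδ
      have hε : 0 < δ / (S - α * X + 1) := by positivity
      have h := hkey _ hε
      rw [hexp2, hexp3] at h
      have h2 : δ / (S - α * X + 1) * (S - α * X) ≤ δ := by
        rw [div_mul_eq_mul_div, div_le_iff₀ (by linarith)]
        nlinarith
      nlinarith
    by_contra hcon
    push_neg at hcon
    have := hlim ((G2 - 2 * α * S + α ^ 2 * X - (l - α) * (S - α * X)) / 2) (by linarith)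
    linarith
  -- G2 ≥ α² X
  have hG2X : α ^ 2 * X ≤ G2 := by
    have hCS : S ≤ ‖gd‖ * ‖x‖ := real_inner_le_norm gd x
    rcases eq_or_lt_of_le (norm_nonneg x) with h0 | h0
    · have : X = 0 := by rw [hX, ← h0]; ring
      rw [this, mul_zero, hG2]; positivity
    · have h1 : α * ‖x‖ * ‖x‖ ≤ ‖gd‖ * ‖x‖ := by
        calc α * ‖x‖ * ‖x‖ = α * X := by rw [hX]; ring
          _ ≤ S := hmono
          _ ≤ ‖gd‖ * ‖x‖ := hCS
      have h2 : α * ‖x‖ ≤ ‖gd‖ := le_of_mul_le_mul_right h1 h0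
      have := mul_le_mul h2 h2 (by positivity) (norm_nonneg gd)
      rw [hG2, hX]; nlinarith
  -- gradient at minimizer is orthogonal to Z
  have horth : g ζ ∈ Zᗮ := by
    intro w hw
    rw [real_inner_comm]
    set c := ⟪g ζ, w⟫ with hc
    by_contra hc0
    have hw0 : w ≠ 0 := by
      intro h; apply hc0; rw [hc, h, inner_zero_right]
    have hnw0 : 0 < ‖w‖ := norm_pos_iff.mpr hw0
    have hnw : 0 < ‖w‖ ^ 2 := by positivity
    set K := l / 2 * ‖w‖ ^ 2 with hK
    have hK0 : 0 < K := by
      have : 0 < l := by linarith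
      positivity
    set t := -c / (2 * K) with ht
    have hmem : ζ + t • w ∈ Z := Z.add_mem hζZ (Z.smul_mem t hw)
    have h1 := hζmin _ hmem
    have h2 := hsm (ζ + t • w) ζ
    have e1 : ζ + t • w - ζ = t • w := by abel
    rw [e1] at h2
    have e2 : ⟪g ζ, t • w⟫ = t * c := by rw [real_inner_smul_right]
    have e3 : ‖t • w‖ ^ 2 = t ^ 2 * ‖w‖ ^ 2 := by
      rw [norm_smul, Real.norm_eq_abs, mul_pow, sq_abs]
    rw [e2, e3] at h2
    have key : 0 ≤ t * c + K * t ^ 2 := by rw [hK]; linarith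
    have ht2 : t * c = -(c ^ 2) / (2 * K) := by rw [ht]; field_simp
    have ht3 : K * t ^ 2 = c ^ 2 / (4 * K) := by rw [ht]; field_simp; ring
    rw [ht2, ht3] at key
    have hc2 : 0 < c ^ 2 := by positivity
    have hcc : 0 < c ^ 2 / (4 * K) := by positivity
    have : -(c ^ 2) / (2 * K) + c ^ 2 / (4 * K) = -(c ^ 2 / (4 * K)) := by
      field_simp; ring
    rw [this] at key
    linarith
  -- projection step
  have hPζ : (Z.orthogonalProjectionOnto (ζ - γ • g ζ) : EuclideanSpace ℝ (Fin d)) = ζ := by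
    have h0 : Z.orthogonalProjectionOnto (g ζ) = 0 :=
      Submodule.orthogonalProjectionOnto_apply_of_mem_orthogonal horth
    rw [map_sub, map_smul, h0, smul_zero, sub_zero]
    exact Submodule.starProjection_eq_self_iff.mpr hζZ
  have hstep : ‖(Z.orthogonalProjectionOnto (z - γ • g z) : EuclideanSpace ℝ (Fin d)) - ζ‖
      ≤ ‖x - γ • gd‖ := by
    conv_lhs => rw [← hPζ]
    rw [← Submodule.coe_sub, ← map_sub]
    have e : (z - γ • g z) - (ζ - γ • g ζ) = x - γ • gd := by
      rw [hx, hgd, smul_sub]; abel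
    rw [e]
    calc ‖(Z.orthogonalProjectionOnto (x - γ • gd) : EuclideanSpace ℝ (Fin d))‖
        = ‖Z.orthogonalProjectionOnto (x - γ • gd)‖ := rfl
      _ ≤ ‖Z.orthogonalProjectionOnto‖ * ‖x - γ • gd‖ :=
          Z.orthogonalProjectionOnto.le_opNorm _
      _ ≤ 1 * ‖x - γ • gd‖ :=
          mul_le_mul_of_nonneg_right (Submodule.orthogonalProjectionOnto_norm_le Z) (norm_nonneg _)
      _ = ‖x - γ • gd‖ := one_mul _
  -- scalar estimate
  have hexp4 : ‖x - γ • gd‖ ^ 2 = X - 2 * γ * S + γ ^ 2 * G2 := by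
    rw [norm_sub_sq_real, real_inner_smul_right, norm_smul, Real.norm_eq_abs,
      mul_pow, sq_abs, hX, hS, hG2, real_inner_comm]
    ring
  have hG2nn : 0 ≤ G2 := by rw [hG2]; positivity
  have hXnn : 0 ≤ X := by rw [hX]; positivity
  have hscalar : X - 2 * γ * S + γ ^ 2 * G2 ≤ (1 - α * γ) ^ 2 * X := by
    -- multiply through by (α + l)
    have hco : G2 + α * l * X ≤ (α + l) * S := by nlinarith [hcoco]
    have h1 : 0 ≤ (2 - γ * (α + l)) * (G2 - α ^ 2 * X) := by
      apply mul_nonneg (by linarith) (by linarith)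
    nlinarith [mul_le_mul_of_nonneg_left hco (le_of_lt hγ), h1, sq_nonneg γ,
      mul_pos hγ hγ]
  have hfin : ‖x - γ • gd‖ ≤ (1 - α * γ) * ‖x‖ := by
    have hb : 0 ≤ (1 - α * γ) * ‖x‖ := mul_nonneg (by linarith) (norm_nonneg x)
    have hsq2 : ‖x - γ • gd‖ ^ 2 ≤ ((1 - α * γ) * ‖x‖) ^ 2 := by
      rw [hexp4, mul_pow, ← hX]
      exact hscalar
    calc ‖x - γ • gd‖ = Real.sqrt (‖x - γ • gd‖ ^ 2) := by
          rw [Real.sqrt_sq (norm_nonneg _)]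
      _ ≤ Real.sqrt (((1 - α * γ) * ‖x‖) ^ 2) := Real.sqrt_le_sqrt hsq2
      _ = (1 - α * γ) * ‖x‖ := Real.sqrt_sq hb
  exact le_trans hstep hfin
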